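/- arXiv:2202.08737 — 4 statements merged into one kernel-verified Lean document; each statement's English description precedes it below -/
import Mathlib

section
/- Any k-plex with at least 2k - 1 vertices has diameter at most 2. Formally, if G = (V, E) has |V| ≥ 2k - 1 and every vertex has at least |V| - k neighbors, then for any two distinct nonadjacent vertices u, v there exists a vertex w adjacent to both u and v. -/
/-- Any k-plex with at least `2k - 1` vertices has diameter at most 2:
any two distinct nonadjacent vertices have a common neighbor. -/
theorem stmt_2 {V : Type*} [Fintype V] [DecidableEq V]
    (G : SimpleGraph V) [DecidableRel G.Adj] (k : ℕ) (hk : 1 ≤ k)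
    (hplex : ∀ v : V, Fintype.card V ≤ (G.neighborFinset v).card + k)
    (hcard : 2 * k - 1 ≤ Fintype.card V) :
    ∀ u v : V, u ≠ v → ¬ G.Adj u v → ∃ w : V, G.Adj u w ∧ G.Adj v w := by
  intro u v huv hadj
  by_contra h
  push_neg at h
  set A : Finset V := Finset.univ \ G.neighborFinset u with hA
  set B : Finset V := Finset.univ \ G.neighborFinset v with hB
  have hAk : A.card ≤ k := by
    have := hplex u
    have hsub : (G.neighborFinset u) ⊆ Finset.univ := Finset.subset_univ _
    have := Finset.card_sdiff_of_subset hsub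
    have hn : Finset.univ.card = Fintype.card V := Finset.card_univ
    have hle := Finset.card_le_univ (G.neighborFinset u)
    rw [hA]
    omega
  have hBk : B.card ≤ k := by
    have := hplex v
    have := Finset.card_sdiff_of_subset (Finset.subset_univ (G.neighborFinset v))
    have hn : Finset.univ.card = Fintype.card V := Finset.card_univ
    have hle := Finset.card_le_univ (G.neighborFinset v)
    rw [hB]
    omega
  have hunion : Finset.univ ⊆ A ∪ B := by
    intro w _
    simp only [hA, hB, Finset.mem_union, Finset.mem_sdiff, Finset.mem_univ, true_and,
      SimpleGraph.mem_neighborFinset]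
    by_contra hc
    push_neg at hc
    exact h w hc.1 hc.2
  have hu : u ∈ A ∩ B := by
    simp only [hA, hB, Finset.mem_inter, Finset.mem_sdiff, Finset.mem_univ, true_and,
      SimpleGraph.mem_neighborFinset]
    exact ⟨G.irrefl, fun h' => hadj (G.adj_symm h')⟩
  have hv : v ∈ A ∩ B := by
    simp only [hA, hB, Finset.mem_inter, Finset.mem_sdiff, Finset.mem_univ, true_and,
      SimpleGraph.mem_neighborFinset]
    exact ⟨hadj, G.irrefl⟩
  have h2 : 2 ≤ (A ∩ B).card := by
    have : ({u, v} : Finset V) ⊆ A ∩ B := by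
      intro x hx
      simp at hx
      rcases hx with rfl | rfl <;> assumption
    calc 2 = ({u, v} : Finset V).card := (Finset.card_pair huv).symm
      _ ≤ (A ∩ B).card := Finset.card_le_card this
  have := Finset.card_union_add_card_inter A B
  have hle : Fintype.card V ≤ (A ∪ B).card := by
    rw [← Finset.card_univ]
    exact Finset.card_le_card hunion
  omega
end

section
/- Let G[P] be a k-plex containing a vertex v with |P| ≥ 2k - 1. Then every vertex of P is either v itself, a neighbor of v, or a vertex at distance exactly 2 from v within G[P]. Formally, P ⊆ {v} ∪ N(v) ∪ N²(v), where N²(v) is computed in G[P]. -/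
/-- In a k-plex `G[P]` with `|P| ≥ 2k - 1` containing `v`, every vertex of `P`
is `v` itself, a neighbor of `v`, or at distance exactly 2 from `v` in `G[P]`. -/
theorem stmt_8 {V : Type*} [Fintype V] [DecidableEq V]
    (G : SimpleGraph V) [DecidableRel G.Adj] (k : ℕ) (hk : 1 ≤ k)
    (P : Finset V)
    (hplex : ∀ x ∈ P, P.card ≤ (P.filter (fun w => G.Adj x w)).card + k)
    (hcard : 2 * k - 1 ≤ P.card)
    (v : V) (hv : v ∈ P) :
    ∀ u, ∀ hu : u ∈ P, u = v ∨ G.Adj v u ∨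
      (G.induce (↑P : Set V)).dist ⟨v, hv⟩ ⟨u, hu⟩ = 2 := by
  intro u hu
  by_cases h1 : u = v
  · exact Or.inl h1
  by_cases h2 : G.Adj v u
  · exact Or.inr (Or.inl h2)
  refine Or.inr (Or.inr ?_)
  have hsub : P.filter (fun w => G.Adj v w) ∪ P.filter (fun w => G.Adj u w)
      ⊆ (P.erase v).erase u := by
    intro x hx
    rcases Finset.mem_union.mp hx with hx' | hx'
    · obtain ⟨hxP, hadj⟩ := Finset.mem_filter.mp hx'
      refine Finset.mem_erase.mpr ⟨?_, Finset.mem_erase.mpr ⟨?_, hxP⟩⟩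
      · rintro rfl; exact h2 hadj
      · rintro rfl; exact G.loopless.irrefl _ hadj
    · obtain ⟨hxP, hadj⟩ := Finset.mem_filter.mp hx'
      refine Finset.mem_erase.mpr ⟨?_, Finset.mem_erase.mpr ⟨?_, hxP⟩⟩
      · rintro rfl; exact G.loopless.irrefl _ hadj
      · rintro rfl; exact h2 hadj.symm
  have hne : (P.filter (fun w => G.Adj v w) ∩ P.filter (fun w => G.Adj u w)).Nonempty := by
    by_contra hemp
    have hdisj : Disjoint (P.filter (fun w => G.Adj v w)) (P.filter (fun w => G.Adj u w)) := by
      rw [Finset.disjoint_iff_inter_eq_empty]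
      exact Finset.not_nonempty_iff_eq_empty.mp hemp
    have h3 : (P.filter (fun w => G.Adj v w)).card + (P.filter (fun w => G.Adj u w)).card
        ≤ ((P.erase v).erase u).card :=
      (Finset.card_union_of_disjoint hdisj) ▸ Finset.card_le_card hsub
    have h4 : ((P.erase v).erase u).card = P.card - 2 := by
      rw [Finset.card_erase_of_mem (Finset.mem_erase.mpr ⟨h1, hu⟩),
        Finset.card_erase_of_mem hv]
      omega
    have h5 := hplex v hv
    have h6 := hplex u hu
    have h7 : 2 ≤ P.card := Finset.one_lt_card.mpr ⟨v, hv, u, hu, fun e => h1 e.symm⟩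
    omega
  obtain ⟨w, hw⟩ := hne
  rw [Finset.mem_inter, Finset.mem_filter, Finset.mem_filter] at hw
  obtain ⟨⟨hwP, hvw⟩, ⟨_, huw⟩⟩ := hw
  have a1 : (G.induce (↑P : Set V)).Adj ⟨v, hv⟩ ⟨w, hwP⟩ := hvw
  have a2 : (G.induce (↑P : Set V)).Adj ⟨w, hwP⟩ ⟨u, hu⟩ := huw.symm
  have hle : (G.induce (↑P : Set V)).dist ⟨v, hv⟩ ⟨u, hu⟩ ≤ 2 := by
    have := SimpleGraph.dist_le
      (SimpleGraph.Walk.cons a1 (SimpleGraph.Walk.cons a2 SimpleGraph.Walk.nil))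
    simpa using this
  have hne0 : (G.induce (↑P : Set V)).dist ⟨v, hv⟩ ⟨u, hu⟩ ≠ 0 := by
    intro h
    rcases SimpleGraph.dist_eq_zero_iff_eq_or_not_reachable.mp h with h' | h'
    · exact h1 (congrArg Subtype.val h').symm
    · exact h' ⟨SimpleGraph.Walk.cons a1 (SimpleGraph.Walk.cons a2 SimpleGraph.Walk.nil)⟩
  have hne1 : (G.induce (↑P : Set V)).dist ⟨v, hv⟩ ⟨u, hu⟩ ≠ 1 := by
    intro h
    have hadj := SimpleGraph.dist_eq_one_iff_adj.mp h
    exact h2 hadj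
  omega
end

section
/- For every integer k ≥ 1, the largest real root γ_k of 1 = x⁻¹ + ... + x^{-(k+1)} satisfies γ_k ≤ 2 - 1/2^{k+1}. -/
/-- For `k ≥ 1`, the largest real root `γ` of `x^(k+1) = x^k + ⋯ + x + 1`
satisfies `γ ≤ 2 - 1/2^(k+1)`. -/
theorem stmt_15 (k : ℕ) (hk : 1 ≤ k) (γ : ℝ)
    (hγ : IsGreatest {x : ℝ | x ^ (k + 1) = ∑ i ∈ Finset.range (k + 1), x ^ i} γ) :
    γ ≤ 2 - 1 / 2 ^ (k + 1) := by
  by_contra h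
  push_neg at h
  have hq : (4:ℝ) ≤ 2 ^ (k + 1) := by
    calc (4:ℝ) = 2 ^ 2 := by norm_num
    _ ≤ 2 ^ (k + 1) := by
      apply pow_le_pow_right₀ (by norm_num) (by omega)
  have hqpos : (0:ℝ) < 2 ^ (k + 1) := by positivity
  have hfrac : 1 / (2:ℝ) ^ (k + 1) ≤ 1 / 4 := by
    apply one_div_le_one_div_of_le <;> linarith
  have hγ1 : (1:ℝ) < γ := by linarith
  have heq := hγ.1
  rw [Set.mem_setOf_eq, geom_sum_eq (by linarith : γ ≠ 1)] at heq
  have hne : γ - 1 ≠ 0 := by linarith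
  field_simp at heq
  -- heq : γ ^ (k + 1) * (γ - 1) = γ ^ (k + 1) - 1
  have key : γ ^ (k + 1) * (2 - γ) = 1 := by nlinarith [heq]
  have hppos : (0:ℝ) < γ ^ (k + 1) := by positivity
  rcases lt_or_ge γ 2 with h2 | h2
  · have hplt : γ ^ (k + 1) < 2 ^ (k + 1) :=
      pow_lt_pow_left₀ h2 (by linarith) (by omega)
    have h2γ : 2 - γ < 1 / 2 ^ (k + 1) := by linarith
    have h2γ0 : 0 < 2 - γ := by linarith
    have : γ ^ (k + 1) * (2 - γ) < 2 ^ (k + 1) * (1 / 2 ^ (k + 1)) := by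
      apply mul_lt_mul' (le_of_lt hplt) h2γ (le_of_lt h2γ0) hqpos
    rw [mul_one_div_cancel (ne_of_gt hqpos)] at this
    linarith
  · nlinarith [key]
end

section
/- In a k-plex G[P] with |P| ≥ 2k - 1 containing vertex v₁, any vertex u ∈ P nonadjacent to v₁ and distinct from v₁ has a common neighbor with v₁ inside P. Formally, if every vertex of G[P] has at least |P| - k neighbors in P, |P| ≥ 2k - 1, v₁, u ∈ P distinct with (v₁, u) ∉ E, then N(v₁) ∩ N(u) ∩ P ≠ ∅. -/
/-- In a k-plex `G[P]` with `|P| ≥ 2k - 1`, any vertex `u ∈ P` distinct from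
and nonadjacent to `v₁ ∈ P` has a common neighbor with `v₁` inside `P`. -/
theorem stmt_19 {V : Type*} [Fintype V] [DecidableEq V]
    (G : SimpleGraph V) [DecidableRel G.Adj] (k : ℕ) (hk : 1 ≤ k)
    (P : Finset V)
    (hplex : ∀ x ∈ P, P.card ≤ (P.filter (fun w => G.Adj x w)).card + k)
    (hcard : 2 * k - 1 ≤ P.card)
    (v₁ u : V) (hv : v₁ ∈ P) (hu : u ∈ P) (hne : v₁ ≠ u) (hnadj : ¬ G.Adj v₁ u) :
    ∃ w ∈ P, G.Adj v₁ w ∧ G.Adj u w := by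
  by_contra h
  push_neg at h
  set A := P.filter (fun w => G.Adj v₁ w) with hA
  set B := P.filter (fun w => G.Adj u w) with hB
  have hdisj : Disjoint A B := by
    rw [Finset.disjoint_left]
    intro w hwA hwB
    simp only [hA, hB, Finset.mem_filter] at hwA hwB
    exact (h w hwA.1 hwA.2) hwB.2
  have hAsub : A ⊆ (P.erase u).erase v₁ := by
    intro w hw
    simp only [hA, Finset.mem_filter] at hw
    refine Finset.mem_erase.mpr ⟨fun e => G.loopless.irrefl v₁ (e ▸ hw.2), Finset.mem_erase.mpr ⟨fun e => hnadj (e ▸ hw.2), hw.1⟩⟩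
  have hBsub : B ⊆ (P.erase u).erase v₁ := by
    intro w hw
    simp only [hB, Finset.mem_filter] at hw
    refine Finset.mem_erase.mpr ⟨fun e => hnadj (G.adj_symm (e ▸ hw.2)), Finset.mem_erase.mpr ⟨fun e => G.loopless.irrefl u (e ▸ hw.2), hw.1⟩⟩
  have hunion : A.card + B.card ≤ P.card - 2 := by
    have h1 : (A ∪ B).card ≤ ((P.erase u).erase v₁).card :=
      Finset.card_le_card (Finset.union_subset hAsub hBsub)
    rw [Finset.card_union_of_disjoint hdisj] at h1
    have h2 : ((P.erase u).erase v₁).card = P.card - 2 := by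
      rw [Finset.card_erase_of_mem (Finset.mem_erase.mpr ⟨hne, hv⟩),
        Finset.card_erase_of_mem hu]
      omega
    omega
  have h3 := hplex v₁ hv
  have h4 := hplex u hu
  rw [← hA] at h3
  rw [← hB] at h4
  have hP2 : 2 ≤ P.card := Finset.one_lt_card.mpr ⟨v₁, hv, u, hu, hne⟩
  omega
end
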